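/- Let X be an infinite set of cardinality κ, S ⊆ X co-large, and f : S² → X. Define g : X² → X by g(x₁,x₂) = f(x₁,x₂) if x₁,x₂ ∈ S; g(x₁,x₂) = γ(x₁) if x₁ ∉ S; g(x₁,x₂) = γ(x₂) if x₁ ∈ S and x₂ ∉ S, where γ : X → X maps X \ S onto X. Then for all unary functions g₁, g₂ each of which is either constant or almost surjective, the function x ↦ g(g₁(x), g₂(x)) is either constant or almost surjective. -/
import Mathlib


open Cardinal

lemma aux_small {X : Type*} (S : Set X) (γ : X → X) (hγ : γ '' Sᶜ = Set.univ)
    (k h : X → X) (hk : #((Set.range k)ᶜ : Set X) < #X)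
    (hh : ∀ x, k x ∉ S → h x = γ (k x)) :
    #((Set.range h)ᶜ : Set X) < #X := by
  have hsub : ((Set.range h)ᶜ : Set X) ⊆ γ '' (Sᶜ \ Set.range k) := by
    intro y hy
    have : y ∈ γ '' Sᶜ := by rw [hγ]; trivial
    obtain ⟨z, hz, rfl⟩ := this
    refine ⟨z, ⟨hz, ?_⟩, rfl⟩
    rintro ⟨x, rfl⟩
    exact hy ⟨x, hh x hz⟩
  calc #((Set.range h)ᶜ : Set X) ≤ #(γ '' (Sᶜ \ Set.range k) : Set X) :=
        Cardinal.mk_le_mk_of_subset hsub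
    _ ≤ #((Sᶜ \ Set.range k) : Set X) := Cardinal.mk_image_le
    _ ≤ #((Set.range k)ᶜ : Set X) :=
        Cardinal.mk_le_mk_of_subset (fun y hy => hy.2)
    _ < #X := hk

theorem stmt_14 {X : Type*} [Infinite X] (S : Set X) (hS : #(Sᶜ : Set X) = #X)
    (f : X → X → X) (γ : X → X) (hγ : γ '' Sᶜ = Set.univ)
    (g : X → X → X)
    (hg1 : ∀ x₁ x₂ : X, x₁ ∈ S → x₂ ∈ S → g x₁ x₂ = f x₁ x₂)
    (hg2 : ∀ x₁ x₂ : X, x₁ ∉ S → g x₁ x₂ = γ x₁)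
    (hg3 : ∀ x₁ x₂ : X, x₁ ∈ S → x₂ ∉ S → g x₁ x₂ = γ x₂) :
    ∀ g₁ g₂ : X → X,
      ((∃ c : X, ∀ x, g₁ x = c) ∨ #((Set.range g₁)ᶜ : Set X) < #X) →
      ((∃ c : X, ∀ x, g₂ x = c) ∨ #((Set.range g₂)ᶜ : Set X) < #X) →
      ((∃ c : X, ∀ x, g (g₁ x) (g₂ x) = c) ∨
        #((Set.range fun x => g (g₁ x) (g₂ x))ᶜ : Set X) < #X) := by
  intro g₁ g₂ h₁ h₂
  rcases h₁ with ⟨c₁, hc₁⟩ | hbig₁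
  · by_cases hc₁S : c₁ ∈ S
    · rcases h₂ with ⟨c₂, hc₂⟩ | hbig₂
      · -- both constant
        by_cases hc₂S : c₂ ∈ S
        · exact Or.inl ⟨f c₁ c₂, fun x => by rw [hc₁, hc₂, hg1 c₁ c₂ hc₁S hc₂S]⟩
        · exact Or.inl ⟨γ c₂, fun x => by rw [hc₁, hc₂, hg3 c₁ c₂ hc₁S hc₂S]⟩
      · -- g₂ almost surjective, g₁ constant in S
        refine Or.inr (aux_small S γ hγ g₂ _ hbig₂ fun x hx => ?_)
        rw [hc₁, hg3 c₁ (g₂ x) hc₁S hx]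
    · exact Or.inl ⟨γ c₁, fun x => by rw [hc₁, hg2 c₁ (g₂ x) hc₁S]⟩
  · -- g₁ almost surjective
    refine Or.inr (aux_small S γ hγ g₁ _ hbig₁ fun x hx => ?_)
    rw [hg2 (g₁ x) (g₂ x) hx]
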